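/- Let |ψ⟩ = √r|00⟩ + √(1−r)|11⟩ and let U_A = e^{iφ_A}(a₀𝟙 + i a₁X + i a₂Y + i a₃Z) ⊗ 𝟙 and V_B = 𝟙 ⊗ e^{iφ_B}(b₀𝟙 + i b₁X + i b₂Y + i b₃Z) with real coefficients satisfying Σaᵢ²=Σbᵢ²=1 be local unitaries, and P⊥ = 𝟙−|ψ⟩⟨ψ|. Then |⟨ψ|U_A† P⊥ V_B|ψ⟩| = 2√(r(1−r)) · |a₁b₁ − a₂b₂ + 2√(r(1−r)) a₃b₃|. -/

import Mathlib

open Matrix Kronecker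

/-- With the Pauli parametrization of local unitaries,
|⟨ψ|U_A† P⊥ V_B|ψ⟩| = 2√(r(1−r))·|a₁b₁ − a₂b₂ + 2√(r(1−r))a₃b₃|. -/
theorem stmt_6 (r : ℝ) (hr0 : 0 ≤ r) (hr1 : r ≤ 1)
    (φA φB a₀ a₁ a₂ a₃ b₀ b₁ b₂ b₃ : ℝ)
    (ha : a₀ ^ 2 + a₁ ^ 2 + a₂ ^ 2 + a₃ ^ 2 = 1)
    (hb : b₀ ^ 2 + b₁ ^ 2 + b₂ ^ 2 + b₃ ^ 2 = 1)
    (X Y Z : Matrix (Fin 2) (Fin 2) ℂ)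
    (hX : X = !![0, 1; 1, 0]) (hY : Y = !![0, -Complex.I; Complex.I, 0])
    (hZ : Z = !![1, 0; 0, -1])
    (U V : Matrix (Fin 2) (Fin 2) ℂ)
    (hU : U = Complex.exp (Complex.I * φA) •
      ((a₀ : ℂ) • (1 : Matrix (Fin 2) (Fin 2) ℂ) +
        ((a₁ : ℂ) * Complex.I) • X + ((a₂ : ℂ) * Complex.I) • Y +
        ((a₃ : ℂ) * Complex.I) • Z))
    (hV : V = Complex.exp (Complex.I * φB) •
      ((b₀ : ℂ) • (1 : Matrix (Fin 2) (Fin 2) ℂ) +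
        ((b₁ : ℂ) * Complex.I) • X + ((b₂ : ℂ) * Complex.I) • Y +
        ((b₃ : ℂ) * Complex.I) • Z))
    (ψ : Fin 2 × Fin 2 → ℂ)
    (hψ : ψ = fun p => if p = (0, 0) then (Real.sqrt r : ℂ)
                       else if p = (1, 1) then (Real.sqrt (1 - r) : ℂ) else 0)
    (P : Matrix (Fin 2 × Fin 2) (Fin 2 × Fin 2) ℂ)
    (hP : P = 1 - Matrix.vecMulVec ψ (star ψ)) :
    ‖(star ψ ⬝ᵥ
        (((U ⊗ₖ (1 : Matrix (Fin 2) (Fin 2) ℂ))ᴴ * P *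
          ((1 : Matrix (Fin 2) (Fin 2) ℂ) ⊗ₖ V)) *ᵥ ψ))‖ =
      2 * Real.sqrt (r * (1 - r)) *
        |a₁ * b₁ - a₂ * b₂ + 2 * Real.sqrt (r * (1 - r)) * a₃ * b₃| := by
  have hr1' : (0:ℝ) ≤ 1 - r := by linarith
  have h1 : ((Real.sqrt r : ℝ) : ℂ)^2 + ((Real.sqrt (1-r) : ℝ) : ℂ)^2 = 1 := by
    have h2 := Real.sq_sqrt hr0
    have h3 := Real.sq_sqrt hr1'
    norm_cast; linarith
  have hvv : ∀ w : Fin 2 × Fin 2 → ℂ,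
      Matrix.vecMulVec ψ (star ψ) *ᵥ w = (star ψ ⬝ᵥ w) • ψ := by
    intro w; funext i
    simp [Matrix.mulVec, Matrix.vecMulVec_apply, dotProduct, Finset.mul_sum,
      mul_assoc, mul_comm, mul_left_comm]
  have key : (star ψ ⬝ᵥ
        (((U ⊗ₖ (1 : Matrix (Fin 2) (Fin 2) ℂ))ᴴ * P *
          ((1 : Matrix (Fin 2) (Fin 2) ℂ) ⊗ₖ V)) *ᵥ ψ)) =
      (starRingEnd ℂ) (Complex.exp (Complex.I * φA)) * Complex.exp (Complex.I * φB) *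
        ((2 * Real.sqrt r * Real.sqrt (1-r) *
          (a₁ * b₁ - a₂ * b₂ + 2 * (Real.sqrt r * Real.sqrt (1-r)) * a₃ * b₃) : ℝ) : ℂ) := by
    rw [mul_assoc, ← Matrix.mulVec_mulVec, Matrix.dotProduct_mulVec, ← Matrix.star_mulVec,
      ← Matrix.mulVec_mulVec, hP, Matrix.sub_mulVec, Matrix.one_mulVec, hvv,
      dotProduct_sub, dotProduct_smul]
    subst hX hY hZ hU hV hψ
    simp only [dotProduct, Fintype.sum_prod_type, Fin.sum_univ_two, Pi.star_apply,
      Matrix.mulVec, Matrix.kroneckerMap_apply, Matrix.one_apply, Matrix.smul_apply,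
      Matrix.add_apply, Matrix.cons_val', Matrix.cons_val_zero, Matrix.cons_val_one,
      Matrix.head_cons, Matrix.empty_val', Matrix.cons_val_fin_one, Matrix.head_fin_const,
      Matrix.of_apply, Prod.mk.injEq, smul_eq_mul, if_true, if_false, one_ne_zero,
      zero_ne_one, and_true, and_false, true_and, false_and, ite_true, ite_false,
      mul_one, mul_zero, zero_mul, one_mul, add_zero, zero_add, star_add, star_mul',
      star_zero, star_one, RCLike.star_def, _root_.map_mul, _root_.map_add, _root_.map_zero,
      _root_.map_one, _root_.map_neg, _root_.map_sub, star_neg, star_sub,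
      Complex.conj_ofReal, Complex.conj_I, Fin.isValue]
    push_cast
    linear_combination ((-1)*((starRingEnd ℂ) (Complex.exp (Complex.I * (φA:ℂ))))*(Complex.exp (Complex.I * (φB:ℂ)))*(a₃:ℂ)*(b₃:ℂ)*((Real.sqrt (1-r) : ℝ):ℂ)^2 + (1)*((starRingEnd ℂ) (Complex.exp (Complex.I * (φA:ℂ))))*(Complex.exp (Complex.I * (φB:ℂ)))*(a₃:ℂ)*(b₃:ℂ)*((Real.sqrt (1-r) : ℝ):ℂ)^4 + (-1)*((starRingEnd ℂ) (Complex.exp (Complex.I * (φA:ℂ))))*(Complex.exp (Complex.I * (φB:ℂ)))*(a₃:ℂ)*(b₃:ℂ)*((Real.sqrt r : ℝ):ℂ)^2 + (-2)*((starRingEnd ℂ) (Complex.exp (Complex.I * (φA:ℂ))))*(Complex.exp (Complex.I * (φB:ℂ)))*(a₃:ℂ)*(b₃:ℂ)*((Real.sqrt r : ℝ):ℂ)^2*((Real.sqrt (1-r) : ℝ):ℂ)^2 + (1)*((starRingEnd ℂ) (Complex.exp (Complex.I * (φA:ℂ))))*(Complex.exp (Complex.I * (φB:ℂ)))*(a₃:ℂ)*(b₃:ℂ)*((Real.sqrt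 r : ℝ):ℂ)^4 + (2)*((starRingEnd ℂ) (Complex.exp (Complex.I * (φA:ℂ))))*(Complex.exp (Complex.I * (φB:ℂ)))*(a₂:ℂ)*(b₂:ℂ)*((Real.sqrt r : ℝ):ℂ)*((Real.sqrt (1-r) : ℝ):ℂ) + (-2)*((starRingEnd ℂ) (Complex.exp (Complex.I * (φA:ℂ))))*(Complex.exp (Complex.I * (φB:ℂ)))*(a₂:ℂ)*(b₂:ℂ)*((Real.sqrt r : ℝ):ℂ)*((Real.sqrt (1-r) : ℝ):ℂ)*Complex.I^2 + (-2)*((starRingEnd ℂ) (Complex.exp (Complex.I * (φA:ℂ))))*(Complex.exp (Complex.I * (φB:ℂ)))*(a₁:ℂ)*(b₁:ℂ)*((Real.sqrt r : ℝ):ℂ)*((Real.sqrt (1-r) : ℝ):ℂ)) * Complex.I_sq + ((-1)*((starRingEnd ℂ) (Complex.exp (Complex.I * (φA:ℂ))))*(Complex.exp (Complex.I * (φB:ℂ)))*(a₃:ℂ)*(b₃:ℂ)*((Real.sqrt (1-r) : ℝ):ℂ)^2 + (-1)*((starRingEnd ℂ) (Complex.exp (Complex.I * (φA:ℂ))))*(Complex.exp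 (Complex.I * (φB:ℂ)))*(a₃:ℂ)*(b₃:ℂ)*((Real.sqrt r : ℝ):ℂ)^2 + (-1)*((starRingEnd ℂ) (Complex.exp (Complex.I * (φA:ℂ))))*(Complex.exp (Complex.I * (φB:ℂ)))*(a₃:ℂ)*(b₀:ℂ)*((Real.sqrt (1-r) : ℝ):ℂ)^2*Complex.I + (1)*((starRingEnd ℂ) (Complex.exp (Complex.I * (φA:ℂ))))*(Complex.exp (Complex.I * (φB:ℂ)))*(a₃:ℂ)*(b₀:ℂ)*((Real.sqrt r : ℝ):ℂ)^2*Complex.I + (1)*((starRingEnd ℂ) (Complex.exp (Complex.I * (φA:ℂ))))*(Complex.exp (Complex.I * (φB:ℂ)))*(a₀:ℂ)*(b₃:ℂ)*((Real.sqrt (1-r) : ℝ):ℂ)^2*Complex.I + (-1)*((starRingEnd ℂ) (Complex.exp (Complex.I * (φA:ℂ))))*(Complex.exp (Complex.I * (φB:ℂ)))*(a₀:ℂ)*(b₃:ℂ)*((Real.sqrt r : ℝ):ℂ)^2*Complex.I + (-1)*((starRingEnd ℂ) (Complex.exp (Complex.I * (φA:ℂ))))*(Complex.exp (Complex.I * (φB:ℂ)))*(a₀:ℂ)*(b₀:ℂ)*((Real.sqrt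 (1-r) : ℝ):ℂ)^2 + (-1)*((starRingEnd ℂ) (Complex.exp (Complex.I * (φA:ℂ))))*(Complex.exp (Complex.I * (φB:ℂ)))*(a₀:ℂ)*(b₀:ℂ)*((Real.sqrt r : ℝ):ℂ)^2) * h1
  rw [key, norm_mul, norm_mul, Complex.norm_conj, Complex.norm_real, Real.norm_eq_abs]
  have habsA : ‖Complex.exp (Complex.I * φA)‖ = 1 := by
    rw [Complex.norm_exp]; simp
  have habsB : ‖Complex.exp (Complex.I * φB)‖ = 1 := by
    rw [Complex.norm_exp]; simp
  rw [habsA, habsB, one_mul, one_mul, mul_assoc 2 (Real.sqrt r),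
    ← Real.sqrt_mul hr0, abs_mul,
    abs_of_nonneg (by positivity : (0:ℝ) ≤ 2 * Real.sqrt (r*(1-r)))]
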